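/- Let B_Δ be a matrix each of whose rows has exactly two nonzero entries, equal to 1 and −1, located in positions belonging to two distinct subdomain blocks, and let B_{Δ,D} be the scaled matrix obtained by multiplying each nonzero entry of B_Δ by a nonnegative weight δ_i†(x) such that for each interface node x the weights over all subdomains sharing x sum to 1 (partition of unity). If each row of B_Δ corresponds to a node shared by exactly two subdomains with weights δ₁ + δ₂ = 1, then B_Δ B_{Δ,D}ᵀ acts as the identity on the range of B_Δ restricted to jump vectors: B_Δ B_{Δ,D}ᵀ g = g for all g in the range of B_Δ. -/
import Mathlib


open Matrix

/-- the scaled jump operator satisfies `B_Δ B_{Δ,D}ᵀ g = g` on the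
range of `B_Δ` (partition-of-unity property of the FETI-DP scaling). -/
theorem stmt10 {r n : ℕ} (B BD : Matrix (Fin r) (Fin n) ℝ)
    (hrow : ∀ i : Fin r, ∃ j k : Fin n, j ≠ k ∧
      B i j = 1 ∧ B i k = -1 ∧ (∀ l, l ≠ j → l ≠ k → B i l = 0) ∧
      ∃ δ₁ δ₂ : ℝ, 0 ≤ δ₁ ∧ 0 ≤ δ₂ ∧ δ₁ + δ₂ = 1 ∧
        BD i j = δ₁ ∧ BD i k = -δ₂ ∧ (∀ l, l ≠ j → l ≠ k → BD i l = 0))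
    (hdisj : ∀ i i' : Fin r, i ≠ i' → ∀ j, B i j = 0 ∨ B i' j = 0) :
    ∀ x : Fin n → ℝ, (B * BDᵀ) *ᵥ (B *ᵥ x) = B *ᵥ x := by
  have hid : B * BDᵀ = 1 := by
    ext i i'
    rw [Matrix.mul_apply]
    by_cases h : i = i'
    · subst h
      obtain ⟨j, k, hjk, hBj, hBk, hB0, δ₁, δ₂, _, _, hsum, hDj, hDk, hD0⟩ := hrow i
      rw [Fintype.sum_eq_add j k hjk (fun l hl => by
        simp [transpose_apply, hB0 l hl.1 hl.2])]
      simp [transpose_apply, hBj, hBk, hDj, hDk, hsum, Matrix.one_apply]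
    · obtain ⟨j, k, hjk, hBj, hBk, hB0, δ₁, δ₂, _, _, hsum, hDj, hDk, hD0⟩ := hrow i'
      rw [Matrix.one_apply_ne h, Finset.sum_eq_zero]
      intro l _
      rcases hdisj i i' h l with h0 | h0
      · simp [h0]
      · have hlj : l ≠ j := fun e => by rw [e, hBj] at h0; norm_num at h0
        have hlk : l ≠ k := fun e => by rw [e, hBk] at h0; norm_num at h0
        simp [transpose_apply, hD0 l hlj hlk]
  intro x
  rw [hid, Matrix.one_mulVec]
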